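/- (Key inequality via pivoting.) Let n ≥ 1 and m ≥ 2, and suppose μ(n+m,m) < μ(n+m,m−1). Then μ(n+m,m) ≥ μ(n,m) + ⌈m/2⌉, where μ(k,m) is the minimum over n×n matrices W over 𝔽₂ with all diagonal entries 1 and column Hamming weights at most m, of max_{x} |W·x|. -/

import Mathlib

/-- `μ(n,m)`: minimum over matrices with unit diagonal and column weights `≤ m`
of `max_x |W·x|`. -/
noncomputable def mu (n m : ℕ) : ℕ :=
  sInf {k : ℕ | ∃ W : Matrix (Fin n) (Fin n) (ZMod 2),
    (∀ i, W i i = 1) ∧ (∀ j, hammingNorm (fun i => W i j) ≤ m) ∧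
    k = Finset.univ.sup fun x : Fin n → ZMod 2 => hammingNorm (W.mulVec x)}

lemma mu_le {k m : ℕ} (W : Matrix (Fin k) (Fin k) (ZMod 2))
    (hd : ∀ i, W i i = 1) (hc : ∀ j, hammingNorm (fun i => W i j) ≤ m) :
    mu k m ≤ Finset.univ.sup fun x : Fin k → ZMod 2 => hammingNorm (W.mulVec x) :=
  Nat.sInf_le ⟨W, hd, hc, rfl⟩

lemma mu_set_nonempty (k m : ℕ) (hm : 1 ≤ m) :
    {j : ℕ | ∃ W : Matrix (Fin k) (Fin k) (ZMod 2),
      (∀ i, W i i = 1) ∧ (∀ j, hammingNorm (fun i => W i j) ≤ m) ∧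
      j = Finset.univ.sup fun x : Fin k → ZMod 2 => hammingNorm (W.mulVec x)}.Nonempty := by
  refine ⟨_, (1 : Matrix (Fin k) (Fin k) (ZMod 2)), fun i => Matrix.one_apply_eq i, ?_, rfl⟩
  intro j
  refine le_trans ?_ hm
  have hsub : (Finset.univ.filter fun i => (1 : Matrix (Fin k) (Fin k) (ZMod 2)) i j ≠ 0)
      ⊆ {j} := by
    intro i hi
    simp only [Finset.mem_filter, Matrix.one_apply, ne_eq, ite_eq_right_iff,
      Classical.not_imp] at hi
    simp [hi.2.1]
  calc hammingNorm (fun i => (1 : Matrix (Fin k) (Fin k) (ZMod 2)) i j)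
      = (Finset.univ.filter fun i => (1 : Matrix (Fin k) (Fin k) (ZMod 2)) i j ≠ 0).card := rfl
    _ ≤ ({j} : Finset (Fin k)).card := Finset.card_le_card hsub
    _ = 1 := Finset.card_singleton j

/-- If `μ(n+m,m) < μ(n+m,m−1)`, then `μ(n+m,m) ≥ μ(n,m) + ⌈m/2⌉`. -/
theorem mu_pivot_ineq (n m : ℕ) (hn : 1 ≤ n) (hm : 2 ≤ m)
    (h : mu (n + m) m < mu (n + m) (m - 1)) :
    mu n m + (m + 1) / 2 ≤ mu (n + m) m := by
  classical
  -- obtain an optimal matrix W for μ(n+m, m)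
  have hmem := Nat.sInf_mem (mu_set_nonempty (n + m) m (by omega))
  obtain ⟨W, hdiag, hcol, hsup⟩ := hmem
  -- W must have a column of weight exactly m
  have hex : ∃ c, hammingNorm (fun i => W i c) = m := by
    by_contra hc
    push_neg at hc
    have hcol' : ∀ j, hammingNorm (fun i => W i j) ≤ m - 1 := by
      intro j
      exact Nat.le_sub_one_of_lt (lt_of_le_of_ne (hcol j) (hc j))
    have h2 := mu_le W hdiag hcol'
    rw [← hsup] at h2
    exact absurd (lt_of_lt_of_le h h2) (lt_irrefl _)
  obtain ⟨c, hc⟩ := hex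
  set S : Finset (Fin (n + m)) := Finset.univ.filter (fun i => W i c ≠ 0) with hSdef
  have hScard : S.card = m := hc
  have hT : Sᶜ.card = n := by
    rw [Finset.card_compl, hScard]
    simp
  -- the equivalence Fin n ≃ Sᶜ
  set e : { x // x ∈ Sᶜ } ≃ Fin n := Finset.equivFinOfCardEq hT with hedef
  set f : Fin n → { x // x ∈ Sᶜ } := fun i => e.symm i with hfdef
  -- the n × n submatrix
  set W' : Matrix (Fin n) (Fin n) (ZMod 2) := fun i j => W (f i) (f j) with hW'def
  have hdiag' : ∀ i, W' i i = 1 := fun i => hdiag _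
  have hcol' : ∀ j, hammingNorm (fun i => W' i j) ≤ m := by
    intro j
    refine le_trans ?_ (hcol (f j))
    have : hammingNorm (fun i => W i (f j))
        = (Finset.univ.filter fun i => W i (f j) ≠ 0).card := rfl
    rw [this]
    refine Finset.card_le_card_of_injOn (fun i => (f i : Fin (n + m))) ?_ ?_
    · intro a ha
      simp only [Finset.mem_coe, Finset.mem_filter, Finset.mem_univ, true_and] at ha ⊢
      exact ha
    · intro a _ b _ hab
      have : f a = f b := Subtype.ext hab
      exact e.symm.injective this
  -- a vector y achieving the max for W'
  obtain ⟨y, -, hy⟩ := Finset.exists_mem_eq_sup Finset.univ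
    (Finset.univ_nonempty) (fun x : Fin n → ZMod 2 => hammingNorm (W'.mulVec x))
  have hmuny : mu n m ≤ hammingNorm (W'.mulVec y) := by
    rw [← hy]; exact mu_le W' hdiag' hcol'
  -- extend y to x₀ on Fin (n+m), zero on S
  set x₀ : Fin (n + m) → ZMod 2 :=
    fun j => if hj : j ∈ Sᶜ then y (e ⟨j, hj⟩) else 0 with hx₀def
  have hx₀f : ∀ j : Fin n, x₀ (f j) = y j := by
    intro j
    have hj : (f j : Fin (n + m)) ∈ Sᶜ := (f j).2
    have : x₀ (f j) = y (e ⟨(f j : Fin (n + m)), hj⟩) := dif_pos hj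
    rw [this]
    congr 1
    have : (⟨(f j : Fin (n + m)), hj⟩ : { x // x ∈ Sᶜ }) = f j := Subtype.ext rfl
    rw [this, hfdef, Equiv.apply_symm_apply]
  have hx₀0 : ∀ j, j ∉ Sᶜ → x₀ j = 0 := fun j hj => dif_neg hj
  -- key claim: on Sᶜ-rows, W·x₀ agrees with W'·y
  have claim1 : ∀ i : Fin n, W.mulVec x₀ (f i) = W'.mulVec y i := by
    intro i
    have step1 : W.mulVec x₀ (f i) = ∑ j ∈ Sᶜ, W (f i) j * x₀ j := by
      rw [Matrix.mulVec, dotProduct]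
      refine (Finset.sum_subset (Finset.subset_univ _) ?_).symm
      intro j _ hj
      rw [hx₀0 j hj, mul_zero]
    have step2 : ∑ j ∈ Sᶜ, W (f i) j * x₀ j
        = ∑ j : Fin n, W (f i) (f j) * x₀ (f j) := by
      rw [← Finset.sum_attach Sᶜ (fun j => W (f i) j * x₀ j)]
      rw [← Finset.univ_eq_attach]
      exact (Fintype.sum_equiv e.symm _ _ (fun j => rfl)).symm
    rw [step1, step2]
    simp only [Matrix.mulVec, dotProduct]
    congr 1
    ext j
    rw [hx₀f j, hW'def]
  -- the column c viewed as a vector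
  have hcolS : ∀ i, i ∈ S → W i c = 1 := by
    intro i hi
    simp only [hSdef, Finset.mem_filter, Finset.mem_univ, true_and] at hi
    have h2 : ∀ a : ZMod 2, a ≠ 0 → a = 1 := by decide
    exact h2 _ hi
  have hcolT : ∀ i, i ∈ Sᶜ → W i c = 0 := by
    intro i hi
    simp only [hSdef, Finset.mem_compl, Finset.mem_filter, Finset.mem_univ, true_and,
      not_not] at hi
    exact hi
  -- mulVec of the single vector e_c
  have hsingle : ∀ i, W.mulVec (Pi.single c 1) i = W i c := by
    intro i
    rw [Matrix.mulVec, dotProduct]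
    rw [Finset.sum_eq_single c]
    · simp
    · intro b _ hb; simp [Pi.single_apply, hb]
    · simp
  set x₁ : Fin (n + m) → ZMod 2 := x₀ + Pi.single c 1 with hx₁def
  have hmv1 : ∀ i, W.mulVec x₁ i = W.mulVec x₀ i + W i c := by
    intro i
    rw [hx₁def, Matrix.mulVec_add]
    simp [hsingle i]
  -- weight splitting
  have hsplit : ∀ v : Fin (n + m) → ZMod 2,
      hammingNorm v = (S.filter fun i => v i ≠ 0).card + (Sᶜ.filter fun i => v i ≠ 0).card := by
    intro v
    have : hammingNorm v = (Finset.univ.filter fun i => v i ≠ 0).card := rfl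
    rw [this, ← Finset.card_union_of_disjoint
      (Finset.disjoint_filter_filter (disjoint_compl_right)), ← Finset.filter_union,
      Finset.union_compl]
  -- T-part : same for x₀ and x₁, and at least μ(n, m)
  have hTpart0 : hammingNorm (W'.mulVec y)
      ≤ (Sᶜ.filter fun i => W.mulVec x₀ i ≠ 0).card := by
    have : hammingNorm (W'.mulVec y)
        = (Finset.univ.filter fun i => W'.mulVec y i ≠ 0).card := rfl
    rw [this]
    refine Finset.card_le_card_of_injOn (fun i => (f i : Fin (n + m))) ?_ ?_
    · intro a ha
      simp only [Finset.mem_coe, Finset.mem_filter, Finset.mem_univ, true_and] at ha ⊢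
      exact ⟨(f a).2, by rw [claim1 a]; exact ha⟩
    · intro a _ b _ hab
      exact e.symm.injective (Subtype.ext hab)
  have hTeq : (Sᶜ.filter fun i => W.mulVec x₁ i ≠ 0)
      = (Sᶜ.filter fun i => W.mulVec x₀ i ≠ 0) := by
    refine Finset.filter_congr ?_
    intro i hi
    rw [hmv1 i, hcolT i hi, add_zero]
  -- S-part : the two options sum to m
  have hSsum : (S.filter fun i => W.mulVec x₀ i ≠ 0).card
      + (S.filter fun i => W.mulVec x₁ i ≠ 0).card = m := by
    have key : (S.filter fun i => W.mulVec x₁ i ≠ 0)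
        = (S.filter fun i => ¬ W.mulVec x₀ i ≠ 0) := by
      refine Finset.filter_congr ?_
      intro i hi
      rw [hmv1 i, hcolS i hi]
      have : ∀ a : ZMod 2, a + 1 ≠ 0 ↔ ¬ a ≠ 0 := by decide
      exact this _
    rw [key, Finset.card_filter_add_card_filter_not, hScard]
  clear_value S e f W' x₀ x₁
  -- choose the better of x₀, x₁
  have hfinal : ∃ x : Fin (n + m) → ZMod 2,
      mu n m + (m + 1) / 2 ≤ hammingNorm (W.mulVec x) := by
    rcases le_or_gt ((m + 1) / 2) ((S.filter fun i => W.mulVec x₀ i ≠ 0).card) with h01 | h01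
    · refine ⟨x₀, ?_⟩
      rw [hsplit (W.mulVec x₀)]
      have h1 := le_trans hmuny hTpart0
      clear * - h1 h01
      omega
    · refine ⟨x₁, ?_⟩
      rw [hsplit (W.mulVec x₁), hTeq]
      have h1 := le_trans hmuny hTpart0
      have h2 : (m + 1) / 2 ≤ (S.filter fun i => W.mulVec x₁ i ≠ 0).card := by
        clear * - hSsum h01
        omega
      clear * - h1 h2
      omega
  obtain ⟨x, hx⟩ := hfinal
  refine le_trans hx ?_
  have hsup' : mu (n + m) m
      = Finset.univ.sup fun x : Fin (n + m) → ZMod 2 => hammingNorm (W.mulVec x) := hsup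
  rw [hsup']
  exact Finset.le_sup (f := fun x : Fin (n + m) → ZMod 2 => hammingNorm (W.mulVec x))
    (Finset.mem_univ x)
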